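/- Let V be a finite set and let (g_k)_{k≥1} be a sequence of reflexive, strongly connected relations on V. Then for every k ≥ 1, either the cumulant g₁ ∘ ⋯ ∘ g_k is the complete relation V × V, or the inclusion g₁ ∘ ⋯ ∘ g_k ⊊ g₁ ∘ ⋯ ∘ g_k ∘ g_{k+1} is strict. In other words, the cumulant strictly grows at every step until it becomes complete. -/

import Mathlib

/-- Composition of a list of relations; the empty composition is equality. -/
def compList {V : Type*} : List (V → V → Prop) → (V → V → Prop)
  | [] => Eq
  | g :: l => Relation.Comp g (compList l)

/-- The cumulant g₁ ∘ ⋯ ∘ g_k of the sequence (g_k): here `g i` is g_{i+1}. -/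
def cumulant {V : Type*} (g : ℕ → (V → V → Prop)) (k : ℕ) : V → V → Prop :=
  compList (List.ofFn fun i : Fin k => g i)

lemma compList_append_single {V : Type*} (l : List (V → V → Prop)) (h : V → V → Prop)
    (x y : V) : compList (l ++ [h]) x y ↔ ∃ z, compList l x z ∧ h z y := by
  induction l generalizing x with
  | nil =>
    simp only [List.nil_append, compList, Relation.Comp]
    constructor
    · rintro ⟨z, hz, rfl⟩; exact ⟨x, rfl, hz⟩
    · rintro ⟨z, rfl, hz⟩; exact ⟨y, hz, rfl⟩
  | cons a l ih =>
    simp only [List.cons_append, compList, Relation.Comp]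
    constructor
    · rintro ⟨z, haz, hz⟩
      obtain ⟨w, hw1, hw2⟩ := (ih z).mp hz
      exact ⟨w, ⟨z, haz, hw1⟩, hw2⟩
    · rintro ⟨w, ⟨z, haz, hzw⟩, hwy⟩
      exact ⟨z, haz, (ih z).mpr ⟨w, hzw, hwy⟩⟩

lemma compList_refl {V : Type*} (l : List (V → V → Prop)) (hl : ∀ h ∈ l, ∀ x, h x x)
    (x : V) : compList l x x := by
  induction l with
  | nil => rfl
  | cons a l ih =>
    exact ⟨x, hl a (List.mem_cons_self ..) x,
      ih (fun h hh => hl h (List.mem_cons_of_mem _ hh))⟩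

lemma cumulant_succ {V : Type*} (g : ℕ → (V → V → Prop)) (k : ℕ) (x y : V) :
    cumulant g (k + 1) x y ↔ ∃ z, cumulant g k x z ∧ g k z y := by
  unfold cumulant
  rw [List.ofFn_succ']
  simpa [List.concat_eq_append] using
    compList_append_single (List.ofFn fun i : Fin k => g i.castSucc) (g k) x y

lemma cumulant_refl {V : Type*} (g : ℕ → (V → V → Prop)) (hrefl : ∀ i x, g i x x)
    (k : ℕ) (x : V) : cumulant g k x x := by
  apply compList_refl
  intro h hh
  simp only [List.mem_ofFn] at hh
  obtain ⟨i, rfl⟩ := hh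
  exact hrefl i

/-- For a sequence of reflexive strongly connected relations on a finite set V,
at every step k ≥ 1 the cumulant g₁ ∘ ⋯ ∘ g_k is either already the complete
relation V × V, or it is strictly contained in g₁ ∘ ⋯ ∘ g_{k+1}. -/
theorem cumulant_grows_until_complete {V : Type*} [Fintype V] [Nonempty V]
    (g : ℕ → (V → V → Prop))
    (hrefl : ∀ i x, g i x x)
    (hconn : ∀ i x y, Relation.ReflTransGen (g i) x y) :
    ∀ k : ℕ, 1 ≤ k →
      (∀ x y, cumulant g k x y) ∨
      ((∀ x y, cumulant g k x y → cumulant g (k + 1) x y) ∧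
        ∃ x y, cumulant g (k + 1) x y ∧ ¬ cumulant g k x y) := by
  intro k _
  by_cases hcomp : ∀ x y, cumulant g k x y
  · exact Or.inl hcomp
  · right
    constructor
    · intro x y hxy
      exact (cumulant_succ g k x y).mpr ⟨y, hxy, hrefl k y⟩
    · push_neg at hcomp
      obtain ⟨a, b, hab⟩ := hcomp
      by_contra hno
      push_neg at hno
      -- every z reachable from a by g k, starting at a, satisfies cumulant g k a z
      have key : ∀ z, Relation.ReflTransGen (g k) a z → cumulant g k a z := by
        intro z hz
        induction hz with
        | refl => exact cumulant_refl g hrefl k a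
        | tail hyz hstep ih =>
          rename_i c d
          have hsucc : cumulant g (k + 1) a d :=
            (cumulant_succ g k a d).mpr ⟨c, ih, hstep⟩
          by_contra hcd
          exact hcd (hno a d hsucc)
      exact hab (key b (hconn k a b))
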